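/- If 1/2 < p < 1 is such that α = (p/(4p-2))·ln(p/(1-p)) > 1, and ζ ∈ (0,1) is the solution distinct from 1 of ζ·e^{α(1-ζ)} = 1, then η := -ln γ / ln ζ > 2, where γ = p/(1-p). -/

import Mathlib

theorem eta_gt_two (p γ α ζ η : ℝ)
    (hp : p ∈ Set.Ioo (1/2 : ℝ) 1)
    (hγ : γ = p / (1 - p))
    (hα : α = p / (4 * p - 2) * Real.log γ)
    (hα1 : 1 < α)
    (hζ : ζ ∈ Set.Ioo (0 : ℝ) 1)
    (hζeq : ζ * Real.exp (α * (1 - ζ)) = 1)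
    (hη : η = - Real.log γ / Real.log ζ) :
    2 < η := by
  obtain ⟨hp1, hp2⟩ := hp
  obtain ⟨hζ0, hζ1⟩ := hζ
  have hp0 : 0 < p := by linarith
  have h1p : 0 < 1 - p := by linarith
  have h2p1 : 0 < 2 * p - 1 := by linarith
  have hγ1 : 1 < γ := by
    rw [hγ, lt_div_iff₀ h1p]; linarith
  have hlogγ : 0 < Real.log γ := Real.log_pos hγ1
  have hγ0 : γ ≠ 0 := ne_of_gt (by linarith)
  have hpne : p ≠ 0 := ne_of_gt hp0
  have h4ne : (4 * p - 2) ≠ 0 := ne_of_gt (by linarith)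
  have hlogζneg : Real.log ζ < 0 := Real.log_neg hζ0 hζ1
  -- log ζ = -(α * (1 - ζ))
  have hlogζ : Real.log ζ = -(α * (1 - ζ)) := by
    have := congrArg Real.log hζeq
    rw [Real.log_mul (ne_of_gt hζ0) (Real.exp_ne_zero _), Real.log_exp,
      Real.log_one] at this
    linarith
  have hinvγ : 1 / γ = (1 - p) / p := by
    rw [hγ]; field_simp
  have hinvγ1 : 1 / γ < 1 := by
    rw [hinvγ, div_lt_one hp0]; linarith
  -- key : 1/γ < ζ
  have hkey : 1 / γ < ζ := by
    by_contra hcon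
    push_neg at hcon
    -- 1/γ = a • ζ + b • 1 with a, b ≥ 0, a + b = 1
    set a : ℝ := (1 - 1/γ) / (1 - ζ) with ha_def
    set b : ℝ := (1/γ - ζ) / (1 - ζ) with hb_def
    have h1ζ : 0 < 1 - ζ := by linarith
    have ha : 0 ≤ a := div_nonneg (by linarith) (le_of_lt h1ζ)
    have hb : 0 ≤ b := div_nonneg (by linarith) (le_of_lt h1ζ)
    have hab : a + b = 1 := by
      rw [ha_def, hb_def, ← add_div, div_eq_one_iff_eq (ne_of_gt h1ζ)]; ring
    have h1ζne : (1 - ζ) ≠ 0 := ne_of_gt h1ζ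
    have hcomb : a • ζ + b • (1:ℝ) = 1 / γ := by
      simp only [smul_eq_mul, ha_def, hb_def]
      field_simp
      ring
    have hconc := (strictConcaveOn_log_Ioi.concaveOn).2
      (Set.mem_Ioi.mpr hζ0) (Set.mem_Ioi.mpr one_pos) ha hb hab
    rw [hcomb, Real.log_one] at hconc
    have hlog_inv : Real.log (1 / γ) = - Real.log γ := by
      rw [one_div, Real.log_inv]
    rw [hlog_inv] at hconc
    -- a * log ζ = -(α * (1 - 1/γ))
    have haζ : a * (1 - ζ) = 1 - 1/γ := by
      rw [ha_def, div_mul_cancel₀ _ h1ζne]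
    have h1 : a * Real.log ζ = -(α * (1 - 1/γ)) := by
      rw [hlogζ]; rw [← haζ]; ring
    -- α * (1 - 1/γ) = log γ / 2
    have h2 : α * (1 - 1/γ) = Real.log γ / 2 := by
      rw [hα, hinvγ, one_sub_div hpne, show (4:ℝ) * p - 2 = 2 * (2 * p - 1) by ring]
      rw [div_mul_eq_mul_div, div_mul_div_comm, div_eq_div_iff (mul_ne_zero (mul_ne_zero two_ne_zero (ne_of_gt h2p1)) hpne) two_ne_zero]
      ring
    have : -(Real.log γ / 2) ≤ - Real.log γ := by
      calc -(Real.log γ / 2) = a * Real.log ζ + b * Real.log 1 := by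
            rw [Real.log_one, mul_zero, add_zero, h1, h2]
          _ ≤ - Real.log γ := by simpa using hconc
    linarith
  -- conclude
  have hζγ : 1 - p < p * ζ := by
    rw [hinvγ, div_lt_iff₀ hp0] at hkey
    linarith
  have hαζpos : 0 < α * (1 - ζ) := by
    nlinarith [hlogζneg, hlogζ]
  have hmain : 2 * (α * (1 - ζ)) < Real.log γ := by
    rw [hα]
    have h4 : 0 < 4 * p - 2 := by linarith
    rw [show (2:ℝ) * (p / (4 * p - 2) * Real.log γ * (1 - ζ))
        = 2 * p * Real.log γ * (1 - ζ) / (4 * p - 2) by ring, div_lt_iff₀ h4]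
    nlinarith
  rw [hη, hlogζ, neg_div_neg_eq, lt_div_iff₀ hαζpos]
  linarith
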